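/- arXiv:2312.14761 — 4 statements merged into one kernel-verified Lean document; each statement's English description precedes it below -/
import Mathlib

section
/- Let n be a natural number and let c_r, c_c : Fin n → Fin 3 be colorings of rows and columns such that for each color i the fibers c_r⁻¹(i) and c_c⁻¹(i) have the same cardinality k_i; fix bijections e_i : Fin k_i ≃ c_r⁻¹(i) and f_i : Fin k_i ≃ c_c⁻¹(i). Then for any two color-preserving permutations σ and σ' of Fin n, one has sgn(σ) · ∏_{i∈Fin 3} sgn(f_i⁻¹ ∘ σ ∘ e_i) = sgn(σ') · ∏_{i∈Fin 3} sgn(f_i⁻¹ ∘ σ' ∘ e_i). In other words, the ratio between the sign of a color-preserving permutation and the product of the signs of its three restricted permutations does not depend on the permutation. -/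
/-- Given row and column colorings `cr cc : Fin n → Fin 3` with fibers of equal sizes
`k i`, enumerated by bijections `e i`, `f i`, a color-preserving permutation `σ`
(one with `cc (σ x) = cr x` for all `x`) restricts, for each color `i`, to the
permutation `(f i)⁻¹ ∘ σ ∘ (e i)` of `Fin (k i)`. -/
def restrictPerm {n : ℕ} (cr cc : Fin n → Fin 3) (k : Fin 3 → ℕ)
    (e : ∀ i : Fin 3, Fin (k i) ≃ {x : Fin n // cr x = i})
    (f : ∀ i : Fin 3, Fin (k i) ≃ {x : Fin n // cc x = i})
    (σ : Equiv.Perm (Fin n)) (hσ : ∀ x : Fin n, cc (σ x) = cr x) (i : Fin 3) :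
    Equiv.Perm (Fin (k i)) :=
  (e i).trans ((σ.subtypeEquiv (fun a => by rw [hσ a])).trans (f i).symm)

/-- The ratio between the sign of a color-preserving permutation and the product of the
signs of its three color-restricted permutations does not depend on the permutation. -/
theorem sign_ratio_independent {n : ℕ} (cr cc : Fin n → Fin 3) (k : Fin 3 → ℕ)
    (e : ∀ i : Fin 3, Fin (k i) ≃ {x : Fin n // cr x = i})
    (f : ∀ i : Fin 3, Fin (k i) ≃ {x : Fin n // cc x = i})
    (σ σ' : Equiv.Perm (Fin n))
    (hσ : ∀ x : Fin n, cc (σ x) = cr x) (hσ' : ∀ x : Fin n, cc (σ' x) = cr x) :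
    Equiv.Perm.sign σ *
        ∏ i : Fin 3, Equiv.Perm.sign (restrictPerm cr cc k e f σ hσ i)
      = Equiv.Perm.sign σ' *
        ∏ i : Fin 3, Equiv.Perm.sign (restrictPerm cr cc k e f σ' hσ' i) := by
  set τ : Equiv.Perm (Fin n) := σ'⁻¹ * σ with hτdef
  have hτ : ∀ x, cr (τ x) = cr x := by
    intro x
    have h1 : cc (σ' (σ'⁻¹ (σ x))) = cr (σ'⁻¹ (σ x)) := hσ' _
    simp only [show σ' (σ'⁻¹ (σ x)) = σ x from σ'.apply_symm_apply (σ x)] at h1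
    simp only [hτdef, Equiv.Perm.mul_apply]
    rw [← h1]
    exact hσ x
  -- the restriction of τ to each fiber of cr
  set τi : ∀ i : Fin 3, Equiv.Perm {x : Fin n // cr x = i} :=
    fun i => τ.subtypeEquiv (fun a => by rw [hτ a]) with hτidef
  -- sign of τ equals product of signs of the τi
  have hsignτ : Equiv.Perm.sign τ = ∏ i : Fin 3, Equiv.Perm.sign (τi i) := by
    have hτeq : τ = Equiv.Perm.ofSubtype (τi 0) *
        (Equiv.Perm.ofSubtype (τi 1) * Equiv.Perm.ofSubtype (τi 2)) := by
      apply Equiv.ext; intro x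
      have h3 : ∀ j : Fin 3, j = 0 ∨ j = 1 ∨ j = 2 := by decide
      simp only [Equiv.Perm.mul_apply]
      rcases h3 (cr x) with h | h | h
      · rw [Equiv.Perm.ofSubtype_apply_of_not_mem (τi 2) (by simp [h]),
          Equiv.Perm.ofSubtype_apply_of_not_mem (τi 1) (by simp [h]),
          Equiv.Perm.ofSubtype_apply_of_mem (τi 0) h]
        simp [hτidef]
      · rw [Equiv.Perm.ofSubtype_apply_of_not_mem (τi 2) (by simp [h]),
          Equiv.Perm.ofSubtype_apply_of_mem (τi 1) h]
        have : cr ((τi 1 ⟨x, h⟩ : {x : Fin n // cr x = 1}) : Fin n) = 1 :=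
          (τi 1 ⟨x, h⟩).2
        rw [Equiv.Perm.ofSubtype_apply_of_not_mem (τi 0) (by simp [this])]
        simp [hτidef]
      · rw [Equiv.Perm.ofSubtype_apply_of_mem (τi 2) h]
        have h2 : cr ((τi 2 ⟨x, h⟩ : {x : Fin n // cr x = 2}) : Fin n) = 2 :=
          (τi 2 ⟨x, h⟩).2
        rw [Equiv.Perm.ofSubtype_apply_of_not_mem (τi 1) (by simp [h2]),
          Equiv.Perm.ofSubtype_apply_of_not_mem (τi 0) (by simp [h2])]
        simp [hτidef]
    rw [hτeq, map_mul, map_mul, Fin.prod_univ_three]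
    simp [mul_assoc]
  -- restriction of σ factors through restriction of σ'
  have hfact : ∀ i : Fin 3, restrictPerm cr cc k e f σ hσ i
      = restrictPerm cr cc k e f σ' hσ' i * ((e i).symm.permCongr (τi i)) := by
    intro i
    apply Equiv.ext
    intro x
    simp only [restrictPerm, Equiv.Perm.mul_apply, Equiv.trans_apply,
      Equiv.permCongr_apply, Equiv.symm_symm, Equiv.apply_symm_apply, hτidef,
      Equiv.subtypeEquiv_apply, hτdef]
    congr 1
    exact Subtype.ext (by simp [Equiv.Perm.mul_apply])
  have hσfact : Equiv.Perm.sign σ = Equiv.Perm.sign σ' * Equiv.Perm.sign τ := by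
    rw [hτdef, map_mul, map_inv, mul_inv_cancel_left]
  have hprod : ∏ i : Fin 3, Equiv.Perm.sign (restrictPerm cr cc k e f σ hσ i)
      = (∏ i : Fin 3, Equiv.Perm.sign (restrictPerm cr cc k e f σ' hσ' i))
        * Equiv.Perm.sign τ := by
    rw [hsignτ, ← Finset.prod_mul_distrib]
    refine Finset.prod_congr rfl fun i _ => ?_
    rw [hfact i, map_mul, Equiv.Perm.sign_permCongr]
  rw [hσfact, hprod]
  have hsq : Equiv.Perm.sign τ * Equiv.Perm.sign τ = 1 := by
    rcases Int.units_eq_one_or (Equiv.Perm.sign τ) with h | h <;> rw [h] <;> rfl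
  calc Equiv.Perm.sign σ' * Equiv.Perm.sign τ *
      ((∏ i : Fin 3, Equiv.Perm.sign (restrictPerm cr cc k e f σ' hσ' i))
        * Equiv.Perm.sign τ)
      = Equiv.Perm.sign σ' *
        (∏ i : Fin 3, Equiv.Perm.sign (restrictPerm cr cc k e f σ' hσ' i)) *
        (Equiv.Perm.sign τ * Equiv.Perm.sign τ) :=
        mul_mul_mul_comm _ _ _ _
    _ = _ := by rw [hsq, mul_one]
end

section
/- Let z₁ < z₂ < z₃ < z₄ < z₅ < z₆ be real numbers. Then the following six expressions sum to 1: Pr₁ = (z₃−z₂)(z₄−z₁)(z₅−z₂)(z₅−z₄)(z₆−z₁)(z₆−z₃) / [(z₃−z₁)(z₄−z₂)(z₅−z₃)(z₆−z₄)(z₅−z₁)(z₆−z₂)]; Pr₂ = (z₂−z₁)(z₄−z₁)(z₄−z₃)(z₅−z₂)(z₆−z₃)(z₆−z₅) / [(z₃−z₁)(z₄−z₂)(z₅−z₃)(z₆−z₄)(z₅−z₁)(z₆−z₂)]; Pr₃ = (z₃−z₂)(z₄−z₃)(z₆−z₁)(z₆−z₅) / [(z₃−z₁)(z₅−z₃)(z₆−z₄)(z₆−z₂)];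 Pr₄ = (z₂−z₁)(z₄−z₃)(z₅−z₄)(z₆−z₁) / [(z₃−z₁)(z₄−z₂)(z₆−z₄)(z₅−z₁)]; Pr₅ = (z₂−z₁)(z₃−z₂)(z₅−z₄)(z₆−z₅) / [(z₄−z₂)(z₅−z₃)(z₆−z₂)(z₅−z₁)]; Pr₆ = 2(z₂−z₁)(z₃−z₂)(z₄−z₃)(z₅−z₄)(z₆−z₅)(z₆−z₁) / [(z₃−z₁)(z₄−z₂)(z₅−z₃)(z₆−z₄)(z₅−z₁)(z₆−z₂)]. -/
set_option maxHeartbeats 2000000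


/-- The six limiting probabilities of the reduced web classes with node types
`(w,b,w,b,w,b)` for boundary points `z₁ < z₂ < z₃ < z₄ < z₅ < z₆` sum to `1`. -/
theorem six_web_probabilities_sum_to_one (z₁ z₂ z₃ z₄ z₅ z₆ : ℝ)
    (h₁ : z₁ < z₂) (h₂ : z₂ < z₃) (h₃ : z₃ < z₄) (h₄ : z₄ < z₅) (h₅ : z₅ < z₆) :
    (z₃ - z₂) * (z₄ - z₁) * (z₅ - z₂) * (z₅ - z₄) * (z₆ - z₁) * (z₆ - z₃) /
      ((z₃ - z₁) * (z₄ - z₂) * (z₅ - z₃) * (z₆ - z₄) * (z₅ - z₁) * (z₆ - z₂)) +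
    (z₂ - z₁) * (z₄ - z₁) * (z₄ - z₃) * (z₅ - z₂) * (z₆ - z₃) * (z₆ - z₅) /
      ((z₃ - z₁) * (z₄ - z₂) * (z₅ - z₃) * (z₆ - z₄) * (z₅ - z₁) * (z₆ - z₂)) +
    (z₃ - z₂) * (z₄ - z₃) * (z₆ - z₁) * (z₆ - z₅) /
      ((z₃ - z₁) * (z₅ - z₃) * (z₆ - z₄) * (z₆ - z₂)) +
    (z₂ - z₁) * (z₄ - z₃) * (z₅ - z₄) * (z₆ - z₁) /
      ((z₃ - z₁) * (z₄ - z₂) * (z₆ - z₄) * (z₅ - z₁)) +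
    (z₂ - z₁) * (z₃ - z₂) * (z₅ - z₄) * (z₆ - z₅) /
      ((z₄ - z₂) * (z₅ - z₃) * (z₆ - z₂) * (z₅ - z₁)) +
    2 * (z₂ - z₁) * (z₃ - z₂) * (z₄ - z₃) * (z₅ - z₄) * (z₆ - z₅) * (z₆ - z₁) /
      ((z₃ - z₁) * (z₄ - z₂) * (z₅ - z₃) * (z₆ - z₄) * (z₅ - z₁) * (z₆ - z₂)) = 1 := by
  have a31 : z₃ - z₁ ≠ 0 := by nlinarith
  have a42 : z₄ - z₂ ≠ 0 := by nlinarith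
  have a53 : z₅ - z₃ ≠ 0 := by nlinarith
  have a64 : z₆ - z₄ ≠ 0 := by nlinarith
  have a51 : z₅ - z₁ ≠ 0 := by nlinarith
  have a62 : z₆ - z₂ ≠ 0 := by nlinarith
  set D : ℝ := (z₃ - z₁) * (z₄ - z₂) * (z₅ - z₃) * (z₆ - z₄) * (z₅ - z₁) * (z₆ - z₂) with hDdef
  have hD : D ≠ 0 := by
    simp only [hDdef]
    positivity
  have t3 : (z₃ - z₂) * (z₄ - z₃) * (z₆ - z₁) * (z₆ - z₅) /
      ((z₃ - z₁) * (z₅ - z₃) * (z₆ - z₄) * (z₆ - z₂)) =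
      (z₃ - z₂) * (z₄ - z₃) * (z₆ - z₁) * (z₆ - z₅) * ((z₄ - z₂) * (z₅ - z₁)) / D := by
    rw [div_eq_div_iff (by positivity) hD, hDdef]; ring
  have t4 : (z₂ - z₁) * (z₄ - z₃) * (z₅ - z₄) * (z₆ - z₁) /
      ((z₃ - z₁) * (z₄ - z₂) * (z₆ - z₄) * (z₅ - z₁)) =
      (z₂ - z₁) * (z₄ - z₃) * (z₅ - z₄) * (z₆ - z₁) * ((z₅ - z₃) * (z₆ - z₂)) / D := by
    rw [div_eq_div_iff (by positivity) hD, hDdef]; ring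
  have t5 : (z₂ - z₁) * (z₃ - z₂) * (z₅ - z₄) * (z₆ - z₅) /
      ((z₄ - z₂) * (z₅ - z₃) * (z₆ - z₂) * (z₅ - z₁)) =
      (z₂ - z₁) * (z₃ - z₂) * (z₅ - z₄) * (z₆ - z₅) * ((z₃ - z₁) * (z₆ - z₄)) / D := by
    rw [div_eq_div_iff (by positivity) hD, hDdef]; ring
  rw [t3, t4, t5, ← add_div, ← add_div, ← add_div,
    ← add_div, ← add_div, div_eq_one_iff_eq hD, hDdef]
  ring
end

section
/- Let z₁ < z₂ < z₃ < z₄ < z₅ < z₆ be real numbers and let X be the 3 × 3 real matrix with entries X_{ij} = 1/(z_{2j} − z_{2i−1}) for i,j ∈ {1,2,3}. Then det X ≠ 0 and |(X₁₂X₂₃X₃₁ − X₁₁X₂₃X₃₂) / det X| = (z₃−z₂)(z₄−z₃)(z₆−z₁)(z₆−z₅) / [(z₃−z₁)(z₅−z₃)(z₆−z₄)(z₆−z₂)]. -/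
set_option maxHeartbeats 2000000

/-- For `z₁ < ⋯ < z₆` and the Cauchy matrix `X i j = 1/(z_{2j} - z_{2i-1})`, the
determinant is nonzero and `|(X₁₂X₂₃X₃₁ − X₁₁X₂₃X₃₂)/det X|` equals the stated product
formula: the limiting probability of the reduced web class pairing `z₁z₆`, `z₂z₃`, `z₄z₅`. -/
theorem six_point_nested_probability (z₁ z₂ z₃ z₄ z₅ z₆ : ℝ)
    (h₁ : z₁ < z₂) (h₂ : z₂ < z₃) (h₃ : z₃ < z₄) (h₄ : z₄ < z₅) (h₅ : z₅ < z₆)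
    (X : Matrix (Fin 3) (Fin 3) ℝ)
    (hX : X = !![1 / (z₂ - z₁), 1 / (z₄ - z₁), 1 / (z₆ - z₁);
                 1 / (z₂ - z₃), 1 / (z₄ - z₃), 1 / (z₆ - z₃);
                 1 / (z₂ - z₅), 1 / (z₄ - z₅), 1 / (z₆ - z₅)]) :
    X.det ≠ 0 ∧
    |(X 0 1 * X 1 2 * X 2 0 - X 0 0 * X 1 2 * X 2 1) / X.det| =
      (z₃ - z₂) * (z₄ - z₃) * (z₆ - z₁) * (z₆ - z₅) /
        ((z₃ - z₁) * (z₅ - z₃) * (z₆ - z₄) * (z₆ - z₂)) := by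
  obtain ⟨a, ha, rfl⟩ : ∃ a, 0 < a ∧ z₂ = z₁ + a := ⟨z₂ - z₁, by linarith, by ring⟩
  obtain ⟨b, hb, rfl⟩ : ∃ b, 0 < b ∧ z₃ = z₁ + a + b := ⟨z₃ - (z₁ + a), by linarith, by ring⟩
  obtain ⟨c, hc, rfl⟩ : ∃ c, 0 < c ∧ z₄ = z₁ + a + b + c :=
    ⟨z₄ - (z₁ + a + b), by linarith, by ring⟩
  obtain ⟨d, hd, rfl⟩ : ∃ d, 0 < d ∧ z₅ = z₁ + a + b + c + d :=
    ⟨z₅ - (z₁ + a + b + c), by linarith, by ring⟩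
  obtain ⟨e, he, rfl⟩ : ∃ e, 0 < e ∧ z₆ = z₁ + a + b + c + d + e :=
    ⟨z₆ - (z₁ + a + b + c + d), by linarith, by ring⟩
  subst hX
  have na := ha.ne'
  have nb := hb.ne'
  have nc := hc.ne'
  have nd := hd.ne'
  have ne' := he.ne'
  have nabc : a + b + c ≠ 0 := by positivity
  have ncde : c + d + e ≠ 0 := by positivity
  have nbcd : b + c + d ≠ 0 := by positivity
  have nall : a + b + c + d + e ≠ 0 := by positivity
  set M := !![1 / (z₁ + a - z₁), 1 / (z₁ + a + b + c - z₁), 1 / (z₁ + a + b + c + d + e - z₁);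
      1 / (z₁ + a - (z₁ + a + b)), 1 / (z₁ + a + b + c - (z₁ + a + b)),
        1 / (z₁ + a + b + c + d + e - (z₁ + a + b));
      1 / (z₁ + a - (z₁ + a + b + c + d)), 1 / (z₁ + a + b + c - (z₁ + a + b + c + d)),
        1 / (z₁ + a + b + c + d + e - (z₁ + a + b + c + d))] with hM
  have e00 : M 0 0 = 1 / a := by
    rw [hM]; simp only [Fin.isValue, Matrix.of_apply, Matrix.cons_val', Matrix.cons_val_zero, Matrix.empty_val', Matrix.cons_val_fin_one, Matrix.cons_val_two, Nat.succ_eq_add_one, Nat.reduceAdd, Matrix.tail_cons, Matrix.head_fin_const, Matrix.cons_val_one, Matrix.head_cons]; rw [show z₁ + a - z₁ = a from by ring]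
  have e01 : M 0 1 = 1 / (a + b + c) := by
    rw [hM]; simp only [Fin.isValue, Matrix.of_apply, Matrix.cons_val', Matrix.cons_val_zero, Matrix.empty_val', Matrix.cons_val_fin_one, Matrix.cons_val_two, Nat.succ_eq_add_one, Nat.reduceAdd, Matrix.tail_cons, Matrix.head_fin_const, Matrix.cons_val_one, Matrix.head_cons]; rw [show z₁ + a + b + c - z₁ = a + b + c from by ring]
  have e12 : M 1 2 = 1 / (c + d + e) := by
    rw [hM]; simp only [Fin.isValue, Matrix.of_apply, Matrix.cons_val', Matrix.cons_val_zero, Matrix.empty_val', Matrix.cons_val_fin_one, Matrix.cons_val_two, Nat.succ_eq_add_one, Nat.reduceAdd, Matrix.tail_cons, Matrix.head_fin_const, Matrix.cons_val_one, Matrix.head_cons]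
    rw [show z₁ + a + b + c + d + e - (z₁ + a + b) = c + d + e from by ring]
  have e20 : M 2 0 = -(1 / (b + c + d)) := by
    rw [hM]; simp only [Fin.isValue, Matrix.of_apply, Matrix.cons_val', Matrix.cons_val_zero, Matrix.empty_val', Matrix.cons_val_fin_one, Matrix.cons_val_two, Nat.succ_eq_add_one, Nat.reduceAdd, Matrix.tail_cons, Matrix.head_fin_const, Matrix.cons_val_one, Matrix.head_cons]
    rw [show z₁ + a - (z₁ + a + b + c + d) = -(b + c + d) from by ring, div_neg]
  have e21 : M 2 1 = -(1 / d) := by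
    rw [hM]; simp only [Fin.isValue, Matrix.of_apply, Matrix.cons_val', Matrix.cons_val_zero, Matrix.empty_val', Matrix.cons_val_fin_one, Matrix.cons_val_two, Nat.succ_eq_add_one, Nat.reduceAdd, Matrix.tail_cons, Matrix.head_fin_const, Matrix.cons_val_one, Matrix.head_cons]
    rw [show z₁ + a + b + c - (z₁ + a + b + c + d) = -d from by ring, div_neg]
  have hdet : M.det =
      ((a + b) * (a + b + c + d) * (c + d) * (b + c) * (b + c + d + e) * (d + e)) /
      (a * (a + b + c) * (a + b + c + d + e) * b * c * (c + d + e) * (b + c + d) * d * e) := by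
    rw [hM, Matrix.det_fin_three]
    simp only [Fin.isValue, Matrix.of_apply, Matrix.cons_val', Matrix.cons_val_zero, Matrix.empty_val', Matrix.cons_val_fin_one, Matrix.cons_val_two, Nat.succ_eq_add_one, Nat.reduceAdd, Matrix.tail_cons, Matrix.head_fin_const, Matrix.cons_val_one, Matrix.head_cons]
    simp only [show z₁ + a - z₁ = a from by ring,
      show z₁ + a + b + c - z₁ = a + b + c from by ring,
      show z₁ + a + b + c + d + e - z₁ = a + b + c + d + e from by ring,
      show z₁ + a - (z₁ + a + b) = -b from by ring,
      show z₁ + a + b + c - (z₁ + a + b) = c from by ring,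
      show z₁ + a + b + c + d + e - (z₁ + a + b) = c + d + e from by ring,
      show z₁ + a - (z₁ + a + b + c + d) = -(b + c + d) from by ring,
      show z₁ + a + b + c - (z₁ + a + b + c + d) = -d from by ring,
      show z₁ + a + b + c + d + e - (z₁ + a + b + c + d) = e from by ring,
      div_neg, inv_neg]
    have t1 : 1 / a * (1 / c) * (1 / e) =
        (a + b + c) * (a + b + c + d + e) * b * (c + d + e) * (b + c + d) * d /
        (a * (a + b + c) * (a + b + c + d + e) * b * c * (c + d + e) * (b + c + d) * d * e) := by
      field_simp
    have t2 : 1 / a * (1 / (c + d + e)) * -(1 / d) =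
        -((a + b + c) * (a + b + c + d + e) * b * c * (b + c + d) * e) /
        (a * (a + b + c) * (a + b + c + d + e) * b * c * (c + d + e) * (b + c + d) * d * e) := by
      field_simp
    have t3 : 1 / (a + b + c) * -(1 / b) * (1 / e) =
        -(a * (a + b + c + d + e) * c * (c + d + e) * (b + c + d) * d) /
        (a * (a + b + c) * (a + b + c + d + e) * b * c * (c + d + e) * (b + c + d) * d * e) := by
      field_simp
    have t4 : 1 / (a + b + c) * (1 / (c + d + e)) * -(1 / (b + c + d)) =
        -(a * (a + b + c + d + e) * b * c * d * e) /
        (a * (a + b + c) * (a + b + c + d + e) * b * c * (c + d + e) * (b + c + d) * d * e) := by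
      field_simp
    have t5 : 1 / (a + b + c + d + e) * -(1 / b) * -(1 / d) =
        a * (a + b + c) * c * (c + d + e) * (b + c + d) * e /
        (a * (a + b + c) * (a + b + c + d + e) * b * c * (c + d + e) * (b + c + d) * d * e) := by
      field_simp
    have t6 : 1 / (a + b + c + d + e) * (1 / c) * -(1 / (b + c + d)) =
        -(a * (a + b + c) * b * (c + d + e) * d * e) /
        (a * (a + b + c) * (a + b + c + d + e) * b * c * (c + d + e) * (b + c + d) * d * e) := by
      field_simp
    rw [t1, t2, t3, t4, t5, t6]
    simp only [← add_div, ← sub_div]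
    congr 1
    ring

  have key : (M 0 1 * M 1 2 * M 2 0 - M 0 0 * M 1 2 * M 2 1) / M.det =
      b * c * (a + b + c + d + e) * e / ((a + b) * (c + d) * (d + e) * (b + c + d + e)) := by
    rw [hdet, e00, e01, e12, e20, e21]
    rw [div_div_eq_mul_div, div_eq_div_iff (by positivity) (by positivity)]
    field_simp
    ring
  refine ⟨by rw [hdet]; positivity, ?_⟩
  rw [key, abs_of_pos (by positivity)]
  simp only [show z₁ + a + b - (z₁ + a) = b from by ring,
    show z₁ + a + b + c - (z₁ + a + b) = c from by ring,
    show z₁ + a + b + c + d + e - z₁ = a + b + c + d + e from by ring,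
    show z₁ + a + b + c + d + e - (z₁ + a + b + c + d) = e from by ring,
    show z₁ + a + b - z₁ = a + b from by ring,
    show z₁ + a + b + c + d - (z₁ + a + b) = c + d from by ring,
    show z₁ + a + b + c + d + e - (z₁ + a + b + c) = d + e from by ring,
    show z₁ + a + b + c + d + e - (z₁ + a) = b + c + d + e from by ring]
end

section
/- Let n ≥ 1 and let w₁ < b₁ < w₂ < b₂ < … < w_{3n} < b_{3n} be 6n real numbers. Let C be the 3n × 3n real matrix with entries C_{ij} = 1/(b_j − w_i), and set I₁ = {1,…,n}, I₂ = {n+1,…,2n}, I₃ = {2n+1,…,3n}. Let C_{I_a, I_b} denote the n × n submatrix of C with rows indexed by I_a and columns by I_b. Then det C ≠ 0 and |det C_{I₁,I₂} · det C_{I₂,I₃} · det C_{I₃,I₁} / det C| = ( ∏ |w_i − b_j|, the product over all pairs (i,j) with i ∈ I_a, j ∈ I_b and (a,b) ∉ {(1,2),(2,3),(3,1)} ) / ( ∏ (w_j − w_i)(b_j − b_i), the product over all pairs i < j with i and j lying in different blocks among I₁,I₂,I₃ ). -/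
/-- The index in `Fin (3*n)` of the `p`-th element of the `a`-th block
`I_{a+1} = {a·n + 1, …, (a+1)·n}`. -/
def blockIdx (n : ℕ) (a : Fin 3) (p : Fin n) : Fin (3 * n) :=
  ⟨a.val * n + p.val, by
    calc a.val * n + p.val < a.val * n + n := by omega
      _ = (a.val + 1) * n := by ring
      _ ≤ 3 * n := Nat.mul_le_mul_right n a.isLt⟩

open Finset Matrix

theorem cauchy_aux (m : ℕ) (x y : Fin (m+1) → ℝ) (h : ∀ i j, y j - x i ≠ 0) :
    Matrix.det (Matrix.of fun i j : Fin (m+1) => (y j - x i)⁻¹)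
      = ((∏ j, (y j - x 0)⁻¹) * ((∏ i : Fin m, (x i.succ - x 0)) *
         ((∏ i : Fin m, (y 0 - x i.succ)⁻¹) * (∏ j : Fin m, (y 0 - y j.succ))))) *
        Matrix.det (Matrix.of fun i j : Fin m => (y j.succ - x i.succ)⁻¹) := by
  set D1 : Matrix (Fin (m+1)) (Fin (m+1)) ℝ :=
    Matrix.of (Fin.cons (fun _ => 1) (fun i j => (y j - x i.succ)⁻¹)) with hD1
  set u1 : Fin (m+1) → ℝ := Fin.cons 1 (fun i => x i.succ - x 0) with hu1
  have step1 :
      Matrix.det (Matrix.of fun i j : Fin (m+1) => (y j - x i)⁻¹)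
        = Matrix.det (Matrix.of fun i j : Fin (m+1) =>
            (y j - x 0)⁻¹ * (Matrix.of fun i j : Fin (m+1) => u1 i * D1 i j) i j) := by
    refine det_eq_of_forall_row_eq_smul_add_const (Fin.cons 0 1) 0 (Fin.cons_zero _ _) ?_
    intro i j
    refine Fin.cases ?_ (fun i => ?_) i
    · simp [hu1, hD1]
    · have h1 := h i.succ j
      have h2 := h 0 j
      simp only [of_apply, hu1, hD1, Fin.cons_zero, Fin.cons_succ, Pi.one_apply]
      field_simp
      ring
  rw [step1, det_mul_row, det_mul_column]
  have step2 :
      D1.det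
        = ((∏ i : Fin m, (y 0 - x i.succ)⁻¹) * (∏ j : Fin m, (y 0 - y j.succ))) *
          Matrix.det (Matrix.of fun i j : Fin m => (y j.succ - x i.succ)⁻¹) := by
    rw [← Matrix.det_transpose]
    set F : Matrix (Fin (m+1)) (Fin (m+1)) ℝ :=
      Matrix.of (Fin.cons (fun _ => 1)
        (fun j => Fin.cons 0 (fun i => (y j.succ - x i.succ)⁻¹))) with hF
    set g : Fin (m+1) → ℝ := Fin.cons 1 (fun j => y 0 - y j.succ) with hg
    set hc : Fin (m+1) → ℝ := Fin.cons 1 (fun i => (y 0 - x i.succ)⁻¹) with hhc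
    have tstep :
        Matrix.det D1ᵀ
          = Matrix.det (Matrix.of fun r c : Fin (m+1) =>
              hc c * (Matrix.of fun r c : Fin (m+1) => g r * F r c) r c) := by
      refine det_eq_of_forall_row_eq_smul_add_const (Fin.cons 0 1) 0 (Fin.cons_zero _ _) ?_
      intro r c
      refine Fin.cases ?_ (fun r => ?_) r <;> refine Fin.cases ?_ (fun c => ?_) c
      · simp [hhc, hg, hF, hD1]
      · simp [hhc, hg, hF, hD1]
      · simp [hhc, hg, hF, hD1]
      · have h1 := h c.succ r.succ
        have h2 := h c.succ 0
        simp only [transpose_apply, of_apply, hhc, hg, hF, hD1, Fin.cons_zero, Fin.cons_succ,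
          Pi.one_apply, mul_one, one_mul, mul_zero, zero_add]
        field_simp
        ring
    rw [tstep, det_mul_row, det_mul_column]
    have step3 :
        F.det = Matrix.det (Matrix.of fun i j : Fin m => (y j.succ - x i.succ)⁻¹) := by
      rw [det_succ_column_zero, Fin.sum_univ_succ]
      simp only [hF, of_apply, Fin.cons_zero, Fin.cons_succ, Fin.val_zero, pow_zero, one_mul,
        Fin.val_succ, mul_zero, zero_mul, Finset.sum_const_zero, add_zero]
      rw [← Matrix.det_transpose]
      congr 1
    rw [step3]
    simp only [hg, hhc, Fin.prod_univ_succ, Fin.cons_zero, Fin.cons_succ, one_mul]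
    ring
  rw [step2]
  simp only [hu1, Fin.prod_univ_succ, Fin.cons_zero, Fin.cons_succ, one_mul]
  ring

theorem cauchy_det_mul : ∀ (m : ℕ) (x y : Fin m → ℝ), (∀ i j, y j - x i ≠ 0) →
    Matrix.det (Matrix.of fun i j => (y j - x i)⁻¹) * ∏ i, ∏ j, (y j - x i)
      = (∏ i, ∏ j ∈ Finset.Ioi i, (x i - x j)) * (∏ i, ∏ j ∈ Finset.Ioi i, (y j - y i)) := by
  intro m
  induction m with
  | zero => intro x y h; simp
  | succ m ih =>
    intro x y h
    have hsplit : (∏ i : Fin (m+1), ∏ j, (y j - x i))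
        = (∏ j, (y j - x 0)) * ((∏ i : Fin m, (y 0 - x i.succ)) *
            ∏ i : Fin m, ∏ j : Fin m, (y j.succ - x i.succ)) := by
      rw [Fin.prod_univ_succ]
      congr 1
      rw [← Finset.prod_mul_distrib]
      exact Finset.prod_congr rfl fun i _ => by rw [Fin.prod_univ_succ]
    have hrx : (∏ i : Fin (m+1), ∏ j ∈ Finset.Ioi i, (x i - x j))
        = (∏ j : Fin m, (x 0 - x j.succ)) *
          ∏ i : Fin m, ∏ j ∈ Finset.Ioi i, (x i.succ - x j.succ) := by
      rw [Fin.prod_univ_succ, Fin.prod_Ioi_zero]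
      congr 1
      exact Finset.prod_congr rfl fun i _ => by rw [Fin.prod_Ioi_succ]
    have hry : (∏ i : Fin (m+1), ∏ j ∈ Finset.Ioi i, (y j - y i))
        = (∏ j : Fin m, (y j.succ - y 0)) *
          ∏ i : Fin m, ∏ j ∈ Finset.Ioi i, (y j.succ - y i.succ) := by
      rw [Fin.prod_univ_succ, Fin.prod_Ioi_zero]
      congr 1
      exact Finset.prod_congr rfl fun i _ => by rw [Fin.prod_Ioi_succ]
    have ihe := ih (fun i => x i.succ) (fun j => y j.succ) (fun i j => h i.succ j.succ)
    have c1 : (∏ j, (y j - x 0)⁻¹) * (∏ j, (y j - x 0)) = 1 := by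
      rw [← Finset.prod_mul_distrib]
      rw [Finset.prod_congr rfl fun j _ => inv_mul_cancel₀ (h 0 j)]
      exact Finset.prod_const_one
    have c2 : (∏ i : Fin m, (y 0 - x i.succ)⁻¹) * (∏ i : Fin m, (y 0 - x i.succ)) = 1 := by
      rw [← Finset.prod_mul_distrib]
      rw [Finset.prod_congr rfl fun i _ => inv_mul_cancel₀ (h i.succ 0)]
      exact Finset.prod_const_one
    have sx : (∏ i : Fin m, (x i.succ - x 0)) * (∏ i : Fin m, (y 0 - y i.succ))
        = (∏ j : Fin m, (x 0 - x j.succ)) * (∏ j : Fin m, (y j.succ - y 0)) := by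
      rw [← Finset.prod_mul_distrib, ← Finset.prod_mul_distrib]
      exact Finset.prod_congr rfl fun i _ => by ring
    rw [cauchy_aux m x y h, hsplit, hrx, hry]
    calc ((∏ j, (y j - x 0)⁻¹) * ((∏ i : Fin m, (x i.succ - x 0)) *
         ((∏ i : Fin m, (y 0 - x i.succ)⁻¹) * (∏ j : Fin m, (y 0 - y j.succ))))) *
        Matrix.det (Matrix.of fun i j : Fin m => (y j.succ - x i.succ)⁻¹) *
        ((∏ j, (y j - x 0)) * ((∏ i : Fin m, (y 0 - x i.succ)) *
            ∏ i : Fin m, ∏ j : Fin m, (y j.succ - x i.succ)))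
        = ((∏ j, (y j - x 0)⁻¹) * (∏ j, (y j - x 0))) *
          (((∏ i : Fin m, (y 0 - x i.succ)⁻¹) * (∏ i : Fin m, (y 0 - x i.succ))) *
           (((∏ i : Fin m, (x i.succ - x 0)) * (∏ i : Fin m, (y 0 - y i.succ))) *
            (Matrix.det (Matrix.of fun i j : Fin m => (y j.succ - x i.succ)⁻¹) *
              ∏ i : Fin m, ∏ j : Fin m, (y j.succ - x i.succ)))) := by ring
      _ = ((∏ j : Fin m, (x 0 - x j.succ)) * (∏ j : Fin m, (y j.succ - y 0))) *
          ((∏ i : Fin m, ∏ j ∈ Finset.Ioi i, (x i.succ - x j.succ)) *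
           ∏ i : Fin m, ∏ j ∈ Finset.Ioi i, (y j.succ - y i.succ)) := by
            rw [c1, c2, sx, ihe]; ring
      _ = _ := by ring

theorem cauchy_det_abs (m : ℕ) (x y : Fin m → ℝ) (h : ∀ i j, y j - x i ≠ 0) :
    |Matrix.det (Matrix.of fun i j => (y j - x i)⁻¹)| * ∏ i, ∏ j, |y j - x i|
      = (∏ i, ∏ j ∈ Finset.Ioi i, |x i - x j|) *
        ∏ i, ∏ j ∈ Finset.Ioi i, |y j - y i| := by
  have := congrArg abs (cauchy_det_mul m x y h)
  simpa [abs_mul, Finset.abs_prod] using this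

theorem prod_Ioi_eq_filter {m : ℕ} (f : Fin m → Fin m → ℝ) :
    (∏ i, ∏ j ∈ Finset.Ioi i, f i j)
      = ∏ p ∈ Finset.univ.filter (fun p : Fin m × Fin m => p.1 < p.2), f p.1 p.2 := by
  rw [Finset.prod_filter,
    show (∏ p : Fin m × Fin m, if p.1 < p.2 then f p.1 p.2 else 1)
      = ∏ i : Fin m, ∏ j : Fin m, if i < j then f i j else 1 from
        Fintype.prod_prod_type' (fun i j => if i < j then f i j else 1)]
  refine Finset.prod_congr rfl fun i _ => ?_
  rw [← Finset.prod_filter, Finset.filter_lt_eq_Ioi]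

theorem blockIdx_div {n : ℕ} (hn : 0 < n) (a : Fin 3) (p : Fin n) :
    (blockIdx n a p).val / n = a.val := by
  show (a.val * n + p.val) / n = a.val
  rw [add_comm, mul_comm, Nat.add_mul_div_left _ _ hn, Nat.div_eq_of_lt p.isLt]
  omega

theorem blockIdx_mod {n : ℕ} (a : Fin 3) (p : Fin n) :
    (blockIdx n a p).val % n = p.val := by
  show (a.val * n + p.val) % n = p.val
  rw [add_comm, Nat.add_mul_mod_self_right, Nat.mod_eq_of_lt p.isLt]

theorem blockIdx_eq_self {n : ℕ} (hn : 0 < n) (a : Fin 3) (i : Fin (3 * n))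
    (ha : i.val / n = a.val) :
    blockIdx n a ⟨i.val % n, Nat.mod_lt _ hn⟩ = i := by
  apply Fin.ext
  show a.val * n + i.val % n = i.val
  rw [← ha, mul_comm]
  exact Nat.div_add_mod _ _

theorem div_lt_three {n : ℕ} (hn : 0 < n) (i : Fin (3 * n)) : i.val / n < 3 :=
  (Nat.div_lt_iff_lt_mul hn).mpr (by have := i.isLt; omega)

theorem prod_block_pairs {n : ℕ} (hn : 0 < n) (a c : Fin 3) (f : Fin (3*n) → Fin (3*n) → ℝ) :
    (∏ p ∈ Finset.univ.filter (fun p : Fin (3*n) × Fin (3*n) =>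
        p.1.val / n = a.val ∧ p.2.val / n = c.val), f p.1 p.2)
      = ∏ p : Fin n, ∏ q : Fin n, f (blockIdx n a p) (blockIdx n c q) := by
  rw [← Fintype.prod_prod_type']
  refine Finset.prod_nbij'
    (fun p => (⟨p.1.val % n, Nat.mod_lt _ hn⟩, ⟨p.2.val % n, Nat.mod_lt _ hn⟩))
    (fun q => (blockIdx n a q.1, blockIdx n c q.2)) (fun _ _ => Finset.mem_univ _)
    (fun q _ => ?_) (fun p hp => ?_) (fun q _ => ?_) (fun p hp => ?_)
  · simp only [Finset.mem_filter, Finset.mem_univ, true_and]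
    exact ⟨blockIdx_div hn a q.1, blockIdx_div hn c q.2⟩
  · simp only [Finset.mem_filter, Finset.mem_univ, true_and] at hp
    exact Prod.ext (blockIdx_eq_self hn a p.1 hp.1) (blockIdx_eq_self hn c p.2 hp.2)
  · exact Prod.ext (Fin.ext (blockIdx_mod a q.1)) (Fin.ext (blockIdx_mod c q.2))
  · simp only [Finset.mem_filter, Finset.mem_univ, true_and] at hp
    rw [blockIdx_eq_self hn a p.1 hp.1, blockIdx_eq_self hn c p.2 hp.2]

theorem prod_same_block {n : ℕ} (hn : 0 < n) (f : Fin (3*n) → Fin (3*n) → ℝ) :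
    (∏ p ∈ Finset.univ.filter (fun p : Fin (3*n) × Fin (3*n) =>
        p.1 < p.2 ∧ p.1.val / n = p.2.val / n), f p.1 p.2)
      = ∏ a : Fin 3, ∏ p : Fin n, ∏ q ∈ Finset.Ioi p,
          f (blockIdx n a p) (blockIdx n a q) := by
  have : ∀ a : Fin 3, (∏ p : Fin n, ∏ q ∈ Finset.Ioi p,
      f (blockIdx n a p) (blockIdx n a q))
      = ∏ t ∈ Finset.univ.filter (fun t : Fin n × Fin n => t.1 < t.2),
          f (blockIdx n a t.1) (blockIdx n a t.2) :=
    fun a => prod_Ioi_eq_filter _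
  simp only [this]
  rw [← Finset.prod_product']
  refine Finset.prod_nbij'
    (fun p => (⟨p.1.val / n, div_lt_three hn p.1⟩,
      (⟨p.1.val % n, Nat.mod_lt _ hn⟩, ⟨p.2.val % n, Nat.mod_lt _ hn⟩)))
    (fun t => (blockIdx n t.1 t.2.1, blockIdx n t.1 t.2.2))
    (fun p hp => ?_) (fun t ht => ?_) (fun p hp => ?_) (fun t ht => ?_) (fun p hp => ?_)
  · simp only [Finset.mem_filter, Finset.mem_univ, true_and, Finset.mem_product] at hp ⊢
    have e1 := Nat.div_add_mod p.1.val n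
    have e2 := Nat.div_add_mod p.2.val n
    have hlt : p.1.val < p.2.val := hp.1
    have hdiv : p.1.val / n = p.2.val / n := hp.2
    rw [← hdiv] at e2
    exact Fin.mk_lt_mk.mpr (by omega)
  · simp only [Finset.mem_product, Finset.mem_filter, Finset.mem_univ, true_and] at ht ⊢
    constructor
    · show (blockIdx n t.1 t.2.1).val < (blockIdx n t.1 t.2.2).val
      show t.1.val * n + t.2.1.val < t.1.val * n + t.2.2.val
      have : t.2.1.val < t.2.2.val := ht
      omega
    · rw [blockIdx_div hn, blockIdx_div hn]
  · simp only [Finset.mem_filter, Finset.mem_univ, true_and] at hp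
    refine Prod.ext ?_ ?_
    · exact blockIdx_eq_self hn _ p.1 rfl
    · have : p.2.val / n = p.1.val / n := hp.2.symm
      exact blockIdx_eq_self hn _ p.2 this
  · simp only [Finset.mem_product, Finset.mem_filter, Finset.mem_univ, true_and] at ht
    refine Prod.ext (Fin.ext ?_) (Prod.ext (Fin.ext ?_) (Fin.ext ?_))
    · show (blockIdx n t.1 t.2.1).val / n = t.1.val
      exact blockIdx_div hn _ _
    · exact blockIdx_mod _ _
    · exact blockIdx_mod _ _
  · simp only [Finset.mem_filter, Finset.mem_univ, true_and] at hp
    rw [blockIdx_eq_self hn _ p.1 rfl]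
    have : p.2.val / n = p.1.val / n := hp.2.symm
    rw [blockIdx_eq_self hn _ p.2 this]

theorem block_cauchy {n : ℕ} (w b : Fin (3*n) → ℝ) (C : Matrix (Fin (3*n)) (Fin (3*n)) ℝ)
    (hC : ∀ i j, C i j = 1/(b j - w i)) (hne : ∀ i j, b j - w i ≠ 0) (a c : Fin 3) :
    |Matrix.det (Matrix.of fun p q : Fin n => C (blockIdx n a p) (blockIdx n c q))| *
        ∏ p : Fin n, ∏ q : Fin n, |b (blockIdx n c q) - w (blockIdx n a p)|
      = (∏ p : Fin n, ∏ q ∈ Finset.Ioi p, |w (blockIdx n a p) - w (blockIdx n a q)|) *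
        ∏ p : Fin n, ∏ q ∈ Finset.Ioi p, |b (blockIdx n c q) - b (blockIdx n c p)| := by
  have hm : (Matrix.of fun p q : Fin n => C (blockIdx n a p) (blockIdx n c q))
      = Matrix.of fun p q : Fin n =>
          ((fun q => b (blockIdx n c q)) q - (fun p => w (blockIdx n a p)) p)⁻¹ := by
    ext p q
    simp [hC, one_div]
  rw [hm]
  exact cauchy_det_abs n _ _ (fun p q => hne _ _)

theorem full_cauchy {m : ℕ} (w b : Fin m → ℝ) (C : Matrix (Fin m) (Fin m) ℝ)
    (hC : ∀ i j, C i j = 1/(b j - w i)) (hne : ∀ i j, b j - w i ≠ 0) :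
    |C.det| * ∏ i, ∏ j, |b j - w i|
      = (∏ i, ∏ j ∈ Finset.Ioi i, |w i - w j|) *
        ∏ i, ∏ j ∈ Finset.Ioi i, |b j - b i| := by
  have hCdef : C = Matrix.of fun i j => (b j - w i)⁻¹ := by
    ext i j
    rw [hC]
    simp [one_div]
  rw [hCdef]
  exact cauchy_det_abs _ w b hne

/-- Scaling-limit probability of the order-`n` triangular honeycomb web (up to its trace):
for interleaved boundary points `w₁ < b₁ < ⋯ < w_{3n} < b_{3n}` and the Cauchy matrix
`C i j = 1/(b j - w i)`, the quotient of the product of the three off-diagonal block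
determinants by `det C` has the stated closed product form. -/
theorem honeycomb_probability_product_form (n : ℕ) (hn : 1 ≤ n)
    (w b : Fin (3 * n) → ℝ)
    (hwb : ∀ i : Fin (3 * n), w i < b i)
    (hbw : ∀ i j : Fin (3 * n), i < j → b i < w j)
    (C : Matrix (Fin (3 * n)) (Fin (3 * n)) ℝ)
    (hC : ∀ i j : Fin (3 * n), C i j = 1 / (b j - w i)) :
    C.det ≠ 0 ∧
    |(Matrix.det (Matrix.of fun p q : Fin n => C (blockIdx n 0 p) (blockIdx n 1 q)) *
      Matrix.det (Matrix.of fun p q : Fin n => C (blockIdx n 1 p) (blockIdx n 2 q)) *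
      Matrix.det (Matrix.of fun p q : Fin n => C (blockIdx n 2 p) (blockIdx n 0 q))) /
        C.det| =
      (∏ p ∈ Finset.univ.filter
          (fun p : Fin (3 * n) × Fin (3 * n) =>
            ¬ ((p.1.val / n, p.2.val / n) = (0, 1) ∨
               (p.1.val / n, p.2.val / n) = (1, 2) ∨
               (p.1.val / n, p.2.val / n) = (2, 0))),
          |w p.1 - b p.2|) /
      (∏ p ∈ Finset.univ.filter
          (fun p : Fin (3 * n) × Fin (3 * n) =>
            p.1 < p.2 ∧ p.1.val / n ≠ p.2.val / n),
          ((w p.2 - w p.1) * (b p.2 - b p.1))) := by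
  have hn0 : 0 < n := hn
  have hwlt : ∀ i j : Fin (3*n), i < j → w i < w j :=
    fun i j hij => (hwb i).trans (hbw i j hij)
  have hblt : ∀ i j : Fin (3*n), i < j → b i < b j :=
    fun i j hij => (hbw i j hij).trans (hwb j)
  have hne : ∀ i j : Fin (3*n), b j - w i ≠ 0 := by
    intro i j
    rcases lt_trichotomy i j with hij | rfl | hji
    · exact sub_ne_zero.mpr (ne_of_gt ((hwb i).trans (hblt i j hij)))
    · exact sub_ne_zero.mpr (ne_of_gt (hwb i))
    · exact sub_ne_zero.mpr (ne_of_lt (hbw j i hji))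
  have hblock_lt : ∀ (a : Fin 3) (p q : Fin n), p < q → blockIdx n a p < blockIdx n a q := by
    intro a p q hpq
    have : p.val < q.val := hpq
    exact Fin.mk_lt_mk.mpr (by omega)
  -- abbreviations
  set X : Fin 3 → Fin 3 → ℝ := fun a c =>
    ∏ p : Fin n, ∏ q : Fin n, |b (blockIdx n c q) - w (blockIdx n a p)| with hXdef
  set W : Fin 3 → ℝ := fun a =>
    ∏ p : Fin n, ∏ q ∈ Finset.Ioi p, |w (blockIdx n a p) - w (blockIdx n a q)| with hWdef
  set B : Fin 3 → ℝ := fun a =>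
    ∏ p : Fin n, ∏ q ∈ Finset.Ioi p, |b (blockIdx n a q) - b (blockIdx n a p)| with hBdef
  set Np : ℝ := ∏ p ∈ Finset.univ.filter
      (fun p : Fin (3 * n) × Fin (3 * n) =>
        ¬ ((p.1.val / n, p.2.val / n) = (0, 1) ∨
           (p.1.val / n, p.2.val / n) = (1, 2) ∨
           (p.1.val / n, p.2.val / n) = (2, 0))),
      |w p.1 - b p.2| with hNpdef
  set D : ℝ := ∏ p ∈ Finset.univ.filter
      (fun p : Fin (3 * n) × Fin (3 * n) =>
        p.1 < p.2 ∧ p.1.val / n ≠ p.2.val / n),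
      ((w p.2 - w p.1) * (b p.2 - b p.1)) with hDdef
  -- block Cauchy identities
  have e01 := block_cauchy w b C hC hne 0 1
  have e12 := block_cauchy w b C hC hne 1 2
  have e20 := block_cauchy w b C hC hne 2 0
  have eF := full_cauchy w b C hC hne
  -- positivity
  have hXpos : ∀ a c : Fin 3, 0 < X a c := by
    intro a c
    refine Finset.prod_pos fun p _ => Finset.prod_pos fun q _ => abs_pos.mpr (hne _ _)
  have hXallpos : 0 < ∏ i, ∏ j, |b j - w i| :=
    Finset.prod_pos fun i _ => Finset.prod_pos fun j _ => abs_pos.mpr (hne _ _)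
  have hWpos : ∀ a : Fin 3, 0 < W a := by
    intro a
    refine Finset.prod_pos fun p _ => Finset.prod_pos fun q hq => abs_pos.mpr ?_
    exact sub_ne_zero.mpr (ne_of_lt (hwlt _ _ (hblock_lt a p q (Finset.mem_Ioi.mp hq))))
  have hBpos : ∀ a : Fin 3, 0 < B a := by
    intro a
    refine Finset.prod_pos fun p _ => Finset.prod_pos fun q hq => abs_pos.mpr ?_
    exact sub_ne_zero.mpr (hblt _ _ (hblock_lt a p q (Finset.mem_Ioi.mp hq))).ne'
  have hNppos : 0 < Np := by
    refine Finset.prod_pos fun p _ => abs_pos.mpr ?_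
    intro hz
    exact hne p.1 p.2 (by linarith [sub_eq_zero.mp hz])
  have hDpos : 0 < D := by
    refine Finset.prod_pos fun p hp => ?_
    rw [Finset.mem_filter] at hp
    exact mul_pos (sub_pos.mpr (hwlt _ _ hp.2.1)) (sub_pos.mpr (hblt _ _ hp.2.1))
  -- identity (I): splitting the full white-black product into block products
  have eXall : (∏ i, ∏ j, |b j - w i|) = X 0 1 * X 1 2 * X 2 0 * Np := by
    have h1 : (∏ i, ∏ j, |b j - w i|)
        = ∏ p : Fin (3*n) × Fin (3*n), |b p.2 - w p.1| :=
      (Fintype.prod_prod_type' (fun i j => |b j - w i|)).symm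
    rw [h1]
    rw [← Finset.prod_filter_mul_prod_filter_not Finset.univ
      (fun p : Fin (3 * n) × Fin (3 * n) =>
        ((p.1.val / n, p.2.val / n) = (0, 1) ∨
         (p.1.val / n, p.2.val / n) = (1, 2) ∨
         (p.1.val / n, p.2.val / n) = (2, 0))) (fun p => |b p.2 - w p.1|)]
    have hNp' : (∏ p ∈ Finset.univ.filter
        (fun p : Fin (3 * n) × Fin (3 * n) =>
          ¬ ((p.1.val / n, p.2.val / n) = (0, 1) ∨
             (p.1.val / n, p.2.val / n) = (1, 2) ∨
             (p.1.val / n, p.2.val / n) = (2, 0))), |b p.2 - w p.1|) = Np := by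
      rw [hNpdef]
      exact Finset.prod_congr rfl fun p _ => abs_sub_comm _ _
    rw [hNp', Finset.filter_or, Finset.filter_or]
    rw [Finset.prod_union, Finset.prod_union]
    · have g01 : (∏ p ∈ Finset.univ.filter
          (fun p : Fin (3 * n) × Fin (3 * n) => (p.1.val / n, p.2.val / n) = (0, 1)),
            |b p.2 - w p.1|) = X 0 1 := by
        rw [show (Finset.univ.filter
            (fun p : Fin (3 * n) × Fin (3 * n) => (p.1.val / n, p.2.val / n) = (0, 1)))
          = Finset.univ.filter (fun p : Fin (3 * n) × Fin (3 * n) =>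
              p.1.val / n = (0 : Fin 3).val ∧ p.2.val / n = (1 : Fin 3).val) from
          Finset.filter_congr fun p _ => by simp [Prod.ext_iff]]
        exact prod_block_pairs hn0 0 1 (fun i j => |b j - w i|)
      have g12 : (∏ p ∈ Finset.univ.filter
          (fun p : Fin (3 * n) × Fin (3 * n) => (p.1.val / n, p.2.val / n) = (1, 2)),
            |b p.2 - w p.1|) = X 1 2 := by
        rw [show (Finset.univ.filter
            (fun p : Fin (3 * n) × Fin (3 * n) => (p.1.val / n, p.2.val / n) = (1, 2)))
          = Finset.univ.filter (fun p : Fin (3 * n) × Fin (3 * n) =>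
              p.1.val / n = (1 : Fin 3).val ∧ p.2.val / n = (2 : Fin 3).val) from
          Finset.filter_congr fun p _ => by simp [Prod.ext_iff]]
        exact prod_block_pairs hn0 1 2 (fun i j => |b j - w i|)
      have g20 : (∏ p ∈ Finset.univ.filter
          (fun p : Fin (3 * n) × Fin (3 * n) => (p.1.val / n, p.2.val / n) = (2, 0)),
            |b p.2 - w p.1|) = X 2 0 := by
        rw [show (Finset.univ.filter
            (fun p : Fin (3 * n) × Fin (3 * n) => (p.1.val / n, p.2.val / n) = (2, 0)))
          = Finset.univ.filter (fun p : Fin (3 * n) × Fin (3 * n) =>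
              p.1.val / n = (2 : Fin 3).val ∧ p.2.val / n = (0 : Fin 3).val) from
          Finset.filter_congr fun p _ => by simp [Prod.ext_iff]]
        exact prod_block_pairs hn0 2 0 (fun i j => |b j - w i|)
      rw [g01, g12, g20]
      ring
    · rw [Finset.disjoint_left]
      intro p hp1 hp2
      simp only [Finset.mem_filter, Finset.mem_univ, true_and, Prod.mk.injEq] at hp1 hp2
      omega
    · rw [Finset.disjoint_left]
      intro p hp1 hp2
      simp only [Finset.mem_filter, Finset.mem_univ, true_and, Finset.mem_union,
        Prod.mk.injEq] at hp1 hp2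
      rcases hp2 with h2 | h2 <;> omega
  -- identity (II): splitting the ordered-pairs product
  have eWB : ((∏ i, ∏ j ∈ Finset.Ioi i, |w i - w j|) *
        ∏ i, ∏ j ∈ Finset.Ioi i, |b j - b i|)
      = (W 0 * B 0) * (W 1 * B 1) * (W 2 * B 2) * D := by
    rw [prod_Ioi_eq_filter (fun i j => |w i - w j|),
      prod_Ioi_eq_filter (fun i j => |b j - b i|), ← Finset.prod_mul_distrib]
    rw [← Finset.prod_filter_mul_prod_filter_not
      (Finset.univ.filter (fun p : Fin (3 * n) × Fin (3 * n) => p.1 < p.2))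
      (fun p : Fin (3 * n) × Fin (3 * n) => p.1.val / n = p.2.val / n)
      (fun p => |w p.1 - w p.2| * |b p.2 - b p.1|)]
    rw [Finset.filter_filter, Finset.filter_filter]
    have hsame : (∏ p ∈ Finset.univ.filter
        (fun p : Fin (3 * n) × Fin (3 * n) => p.1 < p.2 ∧ p.1.val / n = p.2.val / n),
          (|w p.1 - w p.2| * |b p.2 - b p.1|))
        = (W 0 * B 0) * ((W 1 * B 1) * (W 2 * B 2)) := by
      rw [prod_same_block hn0 (fun i j => |w i - w j| * |b j - b i|)]
      have expand : ∀ a : Fin 3,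
          (∏ p : Fin n, ∏ q ∈ Finset.Ioi p,
            (|w (blockIdx n a p) - w (blockIdx n a q)| *
             |b (blockIdx n a q) - b (blockIdx n a p)|)) = W a * B a := by
        intro a
        rw [← Finset.prod_mul_distrib]
        exact Finset.prod_congr rfl fun p _ => Finset.prod_mul_distrib
      rw [Fin.prod_univ_three]
      rw [expand 0, expand 1, expand 2]
      ring
    have hdiff : (∏ p ∈ Finset.univ.filter
        (fun p : Fin (3 * n) × Fin (3 * n) => p.1 < p.2 ∧ ¬ p.1.val / n = p.2.val / n),
          (|w p.1 - w p.2| * |b p.2 - b p.1|)) = D := by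
      rw [hDdef]
      refine Finset.prod_congr rfl fun p hp => ?_
      rw [Finset.mem_filter] at hp
      rw [abs_sub_comm, abs_of_pos (sub_pos.mpr (hwlt _ _ hp.2.1)),
        abs_of_pos (sub_pos.mpr (hblt _ _ hp.2.1))]
    rw [hsame, hdiff]
    ring
  -- determinant of C is nonzero
  have hCd : |C.det| * (∏ i, ∏ j, |b j - w i|) = (W 0 * B 0) * (W 1 * B 1) * (W 2 * B 2) * D := by
    rw [eF, eWB]
  have hdetC : C.det ≠ 0 := by
    intro h0
    rw [h0, abs_zero, zero_mul] at hCd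
    have : 0 < (W 0 * B 0) * (W 1 * B 1) * (W 2 * B 2) * D :=
      mul_pos (mul_pos (mul_pos (mul_pos (hWpos 0) (hBpos 0))
        (mul_pos (hWpos 1) (hBpos 1))) (mul_pos (hWpos 2) (hBpos 2))) hDpos
    linarith
  refine ⟨hdetC, ?_⟩
  rw [abs_div, abs_mul, abs_mul]
  rw [div_eq_div_iff (abs_pos.mpr hdetC).ne' hDpos.ne']
  have hK : X 0 1 * X 1 2 * X 2 0 * Np ≠ 0 :=
    (mul_pos (mul_pos (mul_pos (hXpos 0 1) (hXpos 1 2)) (hXpos 2 0)) hNppos).ne'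
  apply mul_right_cancel₀ hK
  calc |Matrix.det (Matrix.of fun p q : Fin n => C (blockIdx n 0 p) (blockIdx n 1 q))| *
        |Matrix.det (Matrix.of fun p q : Fin n => C (blockIdx n 1 p) (blockIdx n 2 q))| *
        |Matrix.det (Matrix.of fun p q : Fin n => C (blockIdx n 2 p) (blockIdx n 0 q))| * D *
        (X 0 1 * X 1 2 * X 2 0 * Np)
      = ((|Matrix.det (Matrix.of fun p q : Fin n => C (blockIdx n 0 p) (blockIdx n 1 q))| * X 0 1) *
         ((|Matrix.det (Matrix.of fun p q : Fin n => C (blockIdx n 1 p) (blockIdx n 2 q))| * X 1 2) *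
          (|Matrix.det (Matrix.of fun p q : Fin n => C (blockIdx n 2 p) (blockIdx n 0 q))| * X 2 0))) *
        (D * Np) := by ring
    _ = ((W 0 * B 1) * ((W 1 * B 2) * (W 2 * B 0))) * (D * Np) := by rw [e01, e12, e20]
    _ = Np * ((W 0 * B 0) * (W 1 * B 1) * (W 2 * B 2) * D) := by ring
    _ = Np * (|C.det| * (∏ i, ∏ j, |b j - w i|)) := by rw [hCd]
    _ = Np * (|C.det| * (X 0 1 * X 1 2 * X 2 0 * Np)) := by rw [eXall]
    _ = Np * |C.det| * (X 0 1 * X 1 2 * X 2 0 * Np) := by ring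
end
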